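/- (Corollary 2, minimal observation IOC.) Let S ⊆ {1,…,r} and suppose the full-horizon KKT conditions hold for some ω ∈ ℝ^r with ω ≠ 0 and ω_i = 0 for all i ∉ S, with some costates λ ∈ (ℝ^n)^T. Fix a starting time 1 ≤ t < T and suppose the set L = { l : 1 ≤ l ≤ T−t+1 and rank H(t,l) = r+n−1 } is nonempty; let l_min(t) be its minimum. Then every (ω̂, λ̂) ∈ ℝ^r × ℝ^n in the kernel of H(t, l_min(t)) with (ω̂, λ̂) ≠ 0 satisfies ω̂ = c·ω for some constant c ≠ 0. -/

import Mathlib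

open Matrix

noncomputable section

variable {n m r : ℕ}

/-- Block upper bidiagonal matrix `F_x(t,l)` (0-based block indices): diagonal blocks are
`I_n`, and block `(i, i+1)` is `-(A (t+i))ᵀ`. -/
def Fx (A : ℕ → Matrix (Fin n) (Fin n) ℝ) (t l : ℕ) :
    Matrix (Fin l × Fin n) (Fin l × Fin n) ℝ :=
  fun ip jq =>
    if ip.1 = jq.1 then (if ip.2 = jq.2 then (1 : ℝ) else 0)
    else if (jq.1 : ℕ) = (ip.1 : ℕ) + 1 then -((A (t + (ip.1 : ℕ)))ᵀ ip.2 jq.2)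
    else 0

/-- Block diagonal matrix `F_u(t,l)` with diagonal blocks `(B (t+i))ᵀ`. -/
def Fu (B : ℕ → Matrix (Fin n) (Fin m) ℝ) (t l : ℕ) :
    Matrix (Fin l × Fin m) (Fin l × Fin n) ℝ :=
  fun ip jq => if ip.1 = jq.1 then (B (t + (ip.1 : ℕ)))ᵀ ip.2 jq.2 else 0

/-- Vertical stack `Φ_x(t,l)` of the blocks `(G (t+i))ᵀ`. -/
def Phix (G : ℕ → Matrix (Fin r) (Fin n) ℝ) (t l : ℕ) :
    Matrix (Fin l × Fin n) (Fin r) ℝ :=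
  fun ip q => (G (t + (ip.1 : ℕ)))ᵀ ip.2 q

/-- Vertical stack `Φ_u(t,l)` of the blocks `(D (t+i))ᵀ`. -/
def Phiu (D : ℕ → Matrix (Fin r) (Fin m) ℝ) (t l : ℕ) :
    Matrix (Fin l × Fin m) (Fin r) ℝ :=
  fun ip q => (D (t + (ip.1 : ℕ)))ᵀ ip.2 q

/-- `V(t,l)`: all `n×n` blocks zero except the last one, which is `(A (t+l-1))ᵀ`. -/
def Vm (A : ℕ → Matrix (Fin n) (Fin n) ℝ) (t l : ℕ) :
    Matrix (Fin l × Fin n) (Fin n) ℝ :=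
  fun ip q => if (ip.1 : ℕ) = l - 1 then (A (t + l - 1))ᵀ ip.2 q else 0

/-- `H₁(t,l) = F_u(t,l) · F_x(t,l)⁻¹ · Φ_x(t,l) + Φ_u(t,l)`. -/
def H1m (A : ℕ → Matrix (Fin n) (Fin n) ℝ) (B : ℕ → Matrix (Fin n) (Fin m) ℝ)
    (G : ℕ → Matrix (Fin r) (Fin n) ℝ) (D : ℕ → Matrix (Fin r) (Fin m) ℝ) (t l : ℕ) :
    Matrix (Fin l × Fin m) (Fin r) ℝ :=
  Fu B t l * (Fx A t l)⁻¹ * Phix G t l + Phiu D t l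

/-- `H₂(t,l) = F_u(t,l) · F_x(t,l)⁻¹ · V(t,l)`. -/
def H2m (A : ℕ → Matrix (Fin n) (Fin n) ℝ) (B : ℕ → Matrix (Fin n) (Fin m) ℝ) (t l : ℕ) :
    Matrix (Fin l × Fin m) (Fin n) ℝ :=
  Fu B t l * (Fx A t l)⁻¹ * Vm A t l

/-- The recovery matrix `H(t,l) = [H₁(t,l)  H₂(t,l)]`. -/
def Hm (A : ℕ → Matrix (Fin n) (Fin n) ℝ) (B : ℕ → Matrix (Fin n) (Fin m) ℝ)
    (G : ℕ → Matrix (Fin r) (Fin n) ℝ) (D : ℕ → Matrix (Fin r) (Fin m) ℝ) (t l : ℕ) :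
    Matrix (Fin l × Fin m) (Fin r ⊕ Fin n) ℝ :=
  fromCols (H1m A B G D t l) (H2m A B t l)

/-- Stack the vectors `lam t, lam (t+1), …, lam (t+l-1)` into a vector in `ℝ^{nl}`. -/
def stackVec (lam : ℕ → Fin n → ℝ) (t l : ℕ) : Fin l × Fin n → ℝ :=
  fun ip => lam (t + (ip.1 : ℕ)) ip.2

/-- Full-horizon KKT conditions for the weight vector `ω` with costates `lam 1, …, lam T`. -/
def KKT (A : ℕ → Matrix (Fin n) (Fin n) ℝ) (B : ℕ → Matrix (Fin n) (Fin m) ℝ)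
    (G : ℕ → Matrix (Fin r) (Fin n) ℝ) (D : ℕ → Matrix (Fin r) (Fin m) ℝ) (T : ℕ)
    (ω : Fin r → ℝ) (lam : ℕ → Fin n → ℝ) : Prop :=
  -(Fx A 1 T *ᵥ stackVec lam 1 T) + Phix G 1 T *ᵥ ω = 0 ∧
    Fu B 1 T *ᵥ stackVec lam 1 T + Phiu D 1 T *ᵥ ω = 0

/-- The natural identification of `ℝ^{(l+1)·ι}`-indices with `ℝ^{l·ι} × ℝ^{ι}`-indices. -/
def splitIdx (l : ℕ) (ι : Type*) : Fin (l + 1) × ι → (Fin l × ι) ⊕ ι :=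
  fun ip => if h : (ip.1 : ℕ) < l then Sum.inl (⟨ip.1, h⟩, ip.2) else Sum.inr ip.2


lemma sum_fin_ite {l : ℕ} (c : ℕ) (g : Fin l → ℝ) :
    (∑ j : Fin l, if (j : ℕ) = c then g j else 0) =
      if h : c < l then g ⟨c, h⟩ else 0 := by
  split_ifs with h
  · rw [Finset.sum_eq_single (⟨c, h⟩ : Fin l)]
    · simp
    · intro j _ hj; rw [if_neg]; intro he; exact hj (Fin.ext he)
    · simp
  · apply Finset.sum_eq_zero; intro j _; rw [if_neg]
    intro he; exact h (he ▸ j.isLt)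

lemma Fx_blockTriangular (A : ℕ → Matrix (Fin n) (Fin n) ℝ) (t l : ℕ) :
    (Fx A t l).BlockTriangular Prod.fst := by
  intro i j h
  have h' : (j.1 : ℕ) < (i.1 : ℕ) := h
  simp only [Fx]
  rw [if_neg, if_neg]
  · omega
  · intro he; rw [he] at h'; omega

lemma Fx_det (A : ℕ → Matrix (Fin n) (Fin n) ℝ) (t l : ℕ) : (Fx A t l).det = 1 := by
  rw [(Fx_blockTriangular A t l).det]
  apply Finset.prod_eq_one
  intro k _
  have h1 : (Fx A t l).toSquareBlock Prod.fst k = 1 := by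
    ext i j
    have hi : (i : Fin l × Fin n).1 = k := i.2
    have hj : (j : Fin l × Fin n).1 = k := j.2
    simp only [Matrix.toSquareBlock_def, Fx, Matrix.of_apply, Matrix.one_apply]
    rw [if_pos (hi.trans hj.symm)]
    by_cases h : (i : Fin l × Fin n).2 = (j : Fin l × Fin n).2
    · rw [if_pos h, if_pos (Subtype.ext (Prod.ext (hi.trans hj.symm) h))]
    · rw [if_neg h, if_neg]
      intro he; exact h (congrArg (fun x => (Subtype.val x).2) he)
  rw [h1, Matrix.det_one]

lemma Fx_mulVec (A : ℕ → Matrix (Fin n) (Fin n) ℝ) (t l : ℕ) (v : Fin l × Fin n → ℝ)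
    (ip : Fin l × Fin n) :
    (Fx A t l *ᵥ v) ip = v ip - (if h : (ip.1 : ℕ) + 1 < l then
       ∑ q, A (t + (ip.1 : ℕ)) q ip.2 * v (⟨(ip.1 : ℕ) + 1, h⟩, q) else 0) := by
  obtain ⟨i, p⟩ := ip
  simp only [Matrix.mulVec, dotProduct, Fx, Matrix.transpose_apply]
  rw [Fintype.sum_prod_type]
  have key : ∀ j : Fin l, (∑ q, (if i = j then (if p = q then (1:ℝ) else 0)
      else if (j : ℕ) = (i : ℕ) + 1 then -(A (t + (i : ℕ)) q p) else 0) * v (j, q)) =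
      (if i = j then v (j, p) else 0) +
      (if (j : ℕ) = (i : ℕ) + 1 then -∑ q, A (t + (i : ℕ)) q p * v (j, q) else 0) := by
    intro j
    by_cases h1 : i = j
    · subst h1
      have hne : ¬(i : ℕ) = (i : ℕ) + 1 := by omega
      simp [hne, ite_mul, Finset.sum_ite_eq]
    · have key2 : ∀ q : Fin n, (if i = j then (if p = q then (1:ℝ) else 0)
          else if (j : ℕ) = (i : ℕ) + 1 then -(A (t + (i : ℕ)) q p) else 0) * v (j, q) =
          (if (j : ℕ) = (i : ℕ) + 1 then -(A (t + (i : ℕ)) q p * v (j, q)) else 0) := by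
        intro q; rw [if_neg h1]; split_ifs <;> ring
      rw [Finset.sum_congr rfl (fun q _ => key2 q), if_neg h1, zero_add]
      split_ifs with h2
      · simp
      · simp
  rw [Finset.sum_congr rfl (fun j _ => key j), Finset.sum_add_distrib,
    Finset.sum_ite_eq Finset.univ i (fun j => v (j, p)), if_pos (Finset.mem_univ i),
    sum_fin_ite ((i : ℕ) + 1) (fun j => -∑ q, A (t + (i : ℕ)) q p * v (j, q))]
  split_ifs with h
  · rw [sub_eq_add_neg]
  · rw [add_zero, sub_zero]

lemma Fu_mulVec (B : ℕ → Matrix (Fin n) (Fin m) ℝ) (t l : ℕ) (v : Fin l × Fin n → ℝ)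
    (ip : Fin l × Fin m) :
    (Fu B t l *ᵥ v) ip = ∑ q, B (t + (ip.1 : ℕ)) q ip.2 * v (ip.1, q) := by
  obtain ⟨i, p⟩ := ip
  simp only [Matrix.mulVec, dotProduct, Fu, Matrix.transpose_apply]
  rw [Fintype.sum_prod_type, Finset.sum_eq_single i]
  · simp
  · intro j _ hj
    apply Finset.sum_eq_zero; intro q _
    rw [if_neg (fun h => hj h.symm), zero_mul]
  · intro h; exact absurd (Finset.mem_univ i) h

lemma kernel_dim_one {ι κ : Type*} [Fintype ι] [Fintype κ]
    (M : Matrix ι κ ℝ) (hrank : M.rank + 1 = Fintype.card κ)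
    (z w : κ → ℝ) (hz : M *ᵥ z = 0) (hzne : z ≠ 0) (hw : M *ᵥ w = 0) (hwne : w ≠ 0) :
    ∃ c : ℝ, c ≠ 0 ∧ w = c • z := by
  have hker : Module.finrank ℝ (LinearMap.ker M.mulVecLin) = 1 := by
    have h1 := LinearMap.finrank_range_add_finrank_ker M.mulVecLin
    rw [Module.finrank_fintype_fun_eq_card] at h1
    have h2 : M.rank = Module.finrank ℝ (LinearMap.range M.mulVecLin) := rfl
    omega
  have hzmem : z ∈ LinearMap.ker M.mulVecLin := by
    rw [LinearMap.mem_ker, Matrix.mulVecLin_apply]; exact hz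
  have hwmem : w ∈ LinearMap.ker M.mulVecLin := by
    rw [LinearMap.mem_ker, Matrix.mulVecLin_apply]; exact hw
  have hzz : (⟨z, hzmem⟩ : LinearMap.ker M.mulVecLin) ≠ 0 := by
    intro h; exact hzne (congrArg Subtype.val h)
  obtain ⟨c, hc⟩ := (finrank_eq_one_iff_of_nonzero' (⟨z, hzmem⟩ : LinearMap.ker M.mulVecLin)
    hzz).mp hker ⟨w, hwmem⟩
  have hcw : c • z = w := congrArg Subtype.val hc
  refine ⟨c, ?_, hcw.symm⟩
  intro hc0; apply hwne; rw [← hcw, hc0, zero_smul]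

/-- Corollary 2 (minimal observation IOC): with `l_min(t)` the least `l` in the nonempty set
`L = {l : 1 ≤ l ≤ T−t+1, rank H(t,l) = r+n−1}`, every nonzero kernel element
`(ω̂, λ̂)` of `H(t, l_min(t))` satisfies `ω̂ = c·ω` for some `c ≠ 0`. -/
theorem minimal_observation_IOC (n m r T : ℕ) (hn : 0 < n) (hm : 0 < m) (hr : 0 < r) (hT : 1 ≤ T)
    (A : ℕ → Matrix (Fin n) (Fin n) ℝ) (B : ℕ → Matrix (Fin n) (Fin m) ℝ)
    (G : ℕ → Matrix (Fin r) (Fin n) ℝ) (D : ℕ → Matrix (Fin r) (Fin m) ℝ)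
    (hAT : A T = 1)
    (S : Finset (Fin r)) (ω : Fin r → ℝ) (hω : ω ≠ 0) (hsupp : ∀ i ∉ S, ω i = 0)
    (lam : ℕ → Fin n → ℝ) (hKKT : KKT A B G D T ω lam)
    (t : ℕ) (ht : 1 ≤ t) (htT : t < T)
    (hne : {l : ℕ | 1 ≤ l ∧ l ≤ T - t + 1 ∧ (Hm A B G D t l).rank = r + n - 1}.Nonempty) :
    ∀ (ωh : Fin r → ℝ) (lamh : Fin n → ℝ),
      Hm A B G D t (sInf {l : ℕ | 1 ≤ l ∧ l ≤ T - t + 1 ∧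
          (Hm A B G D t l).rank = r + n - 1}) *ᵥ Sum.elim ωh lamh = 0 →
      Sum.elim ωh lamh ≠ 0 →
      ∃ c : ℝ, c ≠ 0 ∧ ωh = c • ω := by
  intro ωh lamh hker0 hne0
  set l := sInf {l : ℕ | 1 ≤ l ∧ l ≤ T - t + 1 ∧
      (Hm A B G D t l).rank = r + n - 1} with hl
  have hmem := Nat.sInf_mem hne
  rw [← hl] at hmem
  simp only [Set.mem_setOf_eq] at hmem
  obtain ⟨hl1, hl2, hlrank⟩ := hmem
  -- extract stationarity equations from KKT
  have hFx1 : Fx A 1 T *ᵥ stackVec lam 1 T = Phix G 1 T *ᵥ ω := neg_add_eq_zero.mp hKKT.1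
  have stat1 : ∀ k : ℕ, 1 ≤ k → k < T → ∀ p : Fin n,
      lam k p = (∑ q, A k q p * lam (k + 1) q) + ∑ q, G k q p * ω q := by
    intro k hk1 hkT p
    have hk : k - 1 < T := by omega
    have h := congrFun hFx1 (⟨k - 1, hk⟩, p)
    rw [Fx_mulVec] at h
    simp only [stackVec, Phix, Matrix.transpose_apply, Matrix.mulVec, dotProduct] at h
    rw [dif_pos (show k - 1 + 1 < T by omega)] at h
    rw [show 1 + (k - 1) = k by omega, show 1 + (k - 1 + 1) = k + 1 by omega] at h
    linarith [h]
  have stat1T : ∀ p : Fin n, lam T p = ∑ q, G T q p * ω q := by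
    intro p
    have hk : T - 1 < T := by omega
    have h := congrFun hFx1 (⟨T - 1, hk⟩, p)
    rw [Fx_mulVec] at h
    simp only [stackVec, Phix, Matrix.transpose_apply, Matrix.mulVec, dotProduct] at h
    rw [dif_neg (show ¬(T - 1 + 1 < T) by omega), sub_zero,
      show 1 + (T - 1) = T by omega] at h
    exact h
  have stat2 : ∀ k : ℕ, 1 ≤ k → k ≤ T → ∀ p : Fin m,
      (∑ q, B k q p * lam k q) + ∑ q, D k q p * ω q = 0 := by
    intro k hk1 hkT p
    have hk : k - 1 < T := by omega
    have h := congrFun hKKT.2 (⟨k - 1, hk⟩, p)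
    rw [Pi.add_apply, Fu_mulVec] at h
    simp only [stackVec, Phiu, Matrix.transpose_apply, Matrix.mulVec, dotProduct,
      Pi.zero_apply] at h
    rw [show 1 + (k - 1) = k by omega] at h
    exact h
  -- the window solution
  set lamh0 : Fin n → ℝ := fun p => if t + l ≤ T then lam (t + l) p else 0 with hlamh0
  have hwin : Fx A t l *ᵥ stackVec lam t l = Phix G t l *ᵥ ω + Vm A t l *ᵥ lamh0 := by
    funext ip
    obtain ⟨i, p⟩ := ip
    have hiL : (i : ℕ) < l := i.isLt
    rw [Fx_mulVec, Pi.add_apply]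
    have hPhix : (Phix G t l *ᵥ ω) (i, p) = ∑ q, G (t + (i : ℕ)) q p * ω q := by
      simp [Matrix.mulVec, dotProduct, Phix]
    have hVm : (Vm A t l *ᵥ lamh0) (i, p) =
        if (i : ℕ) = l - 1 then ∑ q, A (t + l - 1) q p * lamh0 q else 0 := by
      by_cases hi : (i : ℕ) = l - 1 <;> simp [Matrix.mulVec, dotProduct, Vm, hi]
    rw [hPhix, hVm]
    simp only [stackVec]
    by_cases hA : (i : ℕ) + 1 < l
    · rw [dif_pos hA, if_neg (show ¬(i : ℕ) = l - 1 by omega)]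
      have hst := stat1 (t + (i : ℕ)) (by omega) (by omega) p
      rw [show t + ((i : ℕ) + 1) = t + (i : ℕ) + 1 from by omega, add_zero]
      linarith [hst]
    · have hi : (i : ℕ) = l - 1 := by omega
      rw [dif_neg hA, sub_zero, if_pos hi]
      have e : t + (i : ℕ) = t + l - 1 := by omega
      rw [e]
      by_cases hT2 : t + l ≤ T
      · have hst := stat1 (t + l - 1) (by omega) (by omega) p
        rw [show t + l - 1 + 1 = t + l by omega] at hst
        rw [hlamh0]
        simp only [if_pos hT2]
        linarith [hst]
      · rw [hlamh0]
        simp only [if_neg hT2, mul_zero, Finset.sum_const_zero, add_zero]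
        rw [show t + l - 1 = T by omega]
        exact stat1T p
  have hdet : IsUnit (Fx A t l).det := by rw [Fx_det]; exact isUnit_one
  have hsolve : (Fx A t l)⁻¹ *ᵥ (Phix G t l *ᵥ ω + Vm A t l *ᵥ lamh0) = stackVec lam t l := by
    rw [← hwin, Matrix.mulVec_mulVec, Matrix.nonsing_inv_mul _ hdet, Matrix.one_mulVec]
  have hker1 : Hm A B G D t l *ᵥ Sum.elim ω lamh0 = 0 := by
    rw [Hm, Matrix.fromCols_mulVec_sumElim, H1m, H2m, Matrix.add_mulVec]
    have e1 : (Fu B t l * (Fx A t l)⁻¹ * Phix G t l) *ᵥ ω =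
        Fu B t l *ᵥ ((Fx A t l)⁻¹ *ᵥ (Phix G t l *ᵥ ω)) := by
      rw [Matrix.mulVec_mulVec, Matrix.mulVec_mulVec]
    have e2 : (Fu B t l * (Fx A t l)⁻¹ * Vm A t l) *ᵥ lamh0 =
        Fu B t l *ᵥ ((Fx A t l)⁻¹ *ᵥ (Vm A t l *ᵥ lamh0)) := by
      rw [Matrix.mulVec_mulVec, Matrix.mulVec_mulVec]
    rw [e1, e2]
    have e3 : Fu B t l *ᵥ ((Fx A t l)⁻¹ *ᵥ (Phix G t l *ᵥ ω)) +
        Fu B t l *ᵥ ((Fx A t l)⁻¹ *ᵥ (Vm A t l *ᵥ lamh0)) =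
        Fu B t l *ᵥ stackVec lam t l := by
      rw [← Matrix.mulVec_add, ← Matrix.mulVec_add, hsolve]
    have hfin : Fu B t l *ᵥ stackVec lam t l + Phiu D t l *ᵥ ω = 0 := by
      funext ip
      obtain ⟨i, p⟩ := ip
      have hiL : (i : ℕ) < l := i.isLt
      rw [Pi.add_apply, Fu_mulVec, Pi.zero_apply]
      have h := stat2 (t + (i : ℕ)) (by omega) (by omega) p
      simpa [stackVec, Matrix.mulVec, dotProduct, Phiu] using h
    calc Fu B t l *ᵥ ((Fx A t l)⁻¹ *ᵥ (Phix G t l *ᵥ ω)) + Phiu D t l *ᵥ ω +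
          Fu B t l *ᵥ ((Fx A t l)⁻¹ *ᵥ (Vm A t l *ᵥ lamh0))
        = (Fu B t l *ᵥ ((Fx A t l)⁻¹ *ᵥ (Phix G t l *ᵥ ω)) +
            Fu B t l *ᵥ ((Fx A t l)⁻¹ *ᵥ (Vm A t l *ᵥ lamh0))) + Phiu D t l *ᵥ ω := by
          abel
      _ = Fu B t l *ᵥ stackVec lam t l + Phiu D t l *ᵥ ω := by rw [e3]
      _ = 0 := hfin
  have hzne : Sum.elim ω lamh0 ≠ 0 := by
    intro h
    exact hω (funext fun i => congrFun h (Sum.inl i))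
  have hrank : (Hm A B G D t l).rank + 1 = Fintype.card (Fin r ⊕ Fin n) := by
    rw [hlrank]
    simp only [Fintype.card_sum, Fintype.card_fin]
    omega
  obtain ⟨c, hc0, hc⟩ := kernel_dim_one (Hm A B G D t l) hrank (Sum.elim ω lamh0)
    (Sum.elim ωh lamh) hker1 hzne hker0 hne0
  refine ⟨c, hc0, funext fun i => ?_⟩
  have h := congrFun hc (Sum.inl i)
  simpa using h


end
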